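/- Let Γ = (Γ, ≤, μ, (φ_x)_{x∈V(Γ)}) be a trickle graph and let Γ̃ = (Γ, ≤, μ, (φ_x^{-1})_{x∈V(Γ)}) be its dual trickle graph (which is again a trickle graph). Then the dual trickle group of Γ̃, defined by the presentation ⟨V(Γ) | x^{μ(x)} = 1 for x ∈ V(Γ) with μ(x) ≠ ∞, and x·φ_x^{-1}(y) = y·φ_y^{-1}(x) for {x,y} ∈ E(Γ)⟩, is isomorphic to Tr(Γ) via the map sending each generator x to x. -/

import Mathlib

open scoped Classical

universe u

namespace SimpleGraph

/-- `y` belongs to the star of `x` in `G` (i.e. `y = x` or `y` is a neighbour of `x`). -/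
def InStar {V : Type u} (G : SimpleGraph V) (x y : V) : Prop := y = x ∨ G.Adj x y

end SimpleGraph

/-- A **trickle graph**: a simplicial graph together with a partial order on the vertices,
a vertex labeling `mu` with values in `ℕ≥2 ∪ {∞}`, and, for every vertex `x`, an automorphism
`phi x` of the star of `x` (encoded as a permutation of the whole vertex set fixing every
vertex outside of the star of `x`), subject to conditions (a)–(g) of Bellingeri–Chemin–Paris. -/
structure TrickleGraph (V : Type u) [PartialOrder V] where
  /-- the underlying simplicial graph -/
  graph : SimpleGraph V
  /-- the vertex labeling, with `⊤` playing the role of `∞` -/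
  mu : V → ℕ∞
  /-- the automorphism of the star of each vertex, extended by the identity -/
  phi : V → Equiv.Perm V
  two_le_mu : ∀ x : V, 2 ≤ mu x
  /-- condition (a) -/
  adj_of_lt : ∀ x y : V, x < y → graph.Adj x y
  /-- `phi x` is supported on the star of `x` -/
  phi_apply_of_not_inStar : ∀ x y : V, ¬ graph.InStar x y → phi x y = y
  /-- `phi x` maps the star of `x` to itself -/
  inStar_phi : ∀ x y : V, graph.InStar x y → graph.InStar x (phi x y)
  /-- `phi x` is a graph automorphism of the (full subgraph spanned by the) star of `x` -/
  adj_phi_iff : ∀ x y z : V, graph.InStar x y → graph.InStar x z →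
      (graph.Adj (phi x y) (phi x z) ↔ graph.Adj y z)
  /-- condition (b) -/
  adj_incomp : ∀ x y z : V, graph.Adj x y → ¬ x ≤ y → ¬ y ≤ x → z ≤ y →
      graph.Adj x z ∧ ¬ x ≤ z ∧ ¬ z ≤ x
  /-- condition (c) -/
  le_phi_iff : ∀ x y z : V, graph.InStar x y → graph.InStar x z →
      (phi x z ≤ phi x y ↔ z ≤ y)
  /-- condition (d) -/
  lt_of_phi_ne : ∀ x y : V, graph.InStar x y → phi x y ≠ y → y < x
  /-- condition (e): if `mu x` is finite then the order of `phi x` divides `mu x` -/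
  phi_pow_mu : ∀ x : V, phi x ^ WithTop.untopD 0 (mu x) = 1
  /-- condition (f) -/
  mu_phi : ∀ x y : V, graph.InStar x y → mu (phi x y) = mu y
  /-- condition (g) -/
  phi_phi : ∀ x y z : V, z < y → y < x →
      phi x (phi y z) = phi (phi x y) (phi x z)

namespace TrickleGraph

variable {V : Type u} [PartialOrder V]

/-- The set of defining relators of the trickle group: `x ^ (mu x)` whenever `mu x ≠ ∞`, and
`phi_x(y) · x · (phi_y(x) · y)⁻¹` for every edge `{x, y}`. -/
def rels (T : TrickleGraph V) : Set (FreeGroup V) :=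
  {r | ∃ (x : V) (n : ℕ), T.mu x = (n : ℕ∞) ∧ r = FreeGroup.of x ^ n} ∪
  {r | ∃ x y : V, T.graph.Adj x y ∧
      r = FreeGroup.of (T.phi x y) * FreeGroup.of x *
          (FreeGroup.of (T.phi y x) * FreeGroup.of y)⁻¹}

end TrickleGraph

/-- The **trickle group** of a trickle graph. -/
abbrev TrickleGroup {V : Type u} [PartialOrder V] (T : TrickleGraph V) : Type u :=
  PresentedGroup T.rels

namespace TrickleGraph

variable {V : Type u} [PartialOrder V]

/-- The image of a vertex in the trickle group. -/
def gen (T : TrickleGraph V) (x : V) : TrickleGroup T := PresentedGroup.of x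

/-- `mu` converted to a natural number, with `∞` mapped to `0` (so that `ZMod (T.muNat x)`
is the group `ℤ_{mu x}` of the paper, `ZMod 0 = ℤ` corresponding to `mu x = ∞`). -/
def muNat (T : TrickleGraph V) (x : V) : ℕ := WithTop.untopD 0 (T.mu x)

/-- The power `phi_x^a` for an exponent `a ∈ ℤ_{mu x}`; it is well defined on representatives
by condition (e). -/
def phiPow (T : TrickleGraph V) (x : V) (a : ZMod (T.muNat x)) : Equiv.Perm V :=
  T.phi x ^ (ZMod.cast a : ℤ)

theorem mu_phi_apply (T : TrickleGraph V) (x y : V) : T.mu (T.phi x y) = T.mu y := by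
  by_cases h : T.graph.InStar x y
  · exact T.mu_phi x y h
  · rw [T.phi_apply_of_not_inStar x y h]

theorem mu_phi_zpow (T : TrickleGraph V) (x : V) :
    ∀ (n : ℤ) (y : V), T.mu ((T.phi x ^ n) y) = T.mu y := by
  have hinv : ∀ y : V, T.mu ((T.phi x)⁻¹ y) = T.mu y := by
    intro y
    conv_rhs => rw [← Equiv.apply_symm_apply (T.phi x) y]
    exact (T.mu_phi_apply x ((T.phi x)⁻¹ y)).symm
  intro n
  induction n using Int.induction_on with
  | zero => intro y; simp
  | succ k ih =>
      intro y
      have h : (T.phi x ^ ((k : ℤ) + 1)) y = (T.phi x ^ (k : ℤ)) (T.phi x y) := by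
        rw [zpow_add_one]; rfl
      rw [h, ih (T.phi x y), T.mu_phi_apply]
  | pred k ih =>
      intro y
      have h : (T.phi x ^ (-(k : ℤ) - 1)) y = (T.phi x ^ (-(k : ℤ))) ((T.phi x)⁻¹ y) := by
        rw [zpow_sub_one]; rfl
      rw [h, ih ((T.phi x)⁻¹ y), hinv]

theorem mu_phiPow (T : TrickleGraph V) (x : V) (a : ZMod (T.muNat x)) (y : V) :
    T.mu ((T.phiPow x a) y) = T.mu y :=
  T.mu_phi_zpow x _ y

theorem muNat_phiPow (T : TrickleGraph V) (x : V) (a : ZMod (T.muNat x)) (y : V) :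
    T.muNat ((T.phiPow x a) y) = T.muNat y :=
  congrArg (fun m : ℕ∞ => WithTop.untopD 0 m) (T.mu_phiPow x a y)

end TrickleGraph

/-- Transport of a `ZMod` element along an equality of moduli. -/
def zmodCongr {m k : ℕ} (h : m = k) (a : ZMod m) : ZMod k := by subst h; exact a

theorem zmodCongr_ne_zero {m k : ℕ} (h : m = k) {a : ZMod m} (ha : a ≠ 0) :
    zmodCongr h a ≠ 0 := by subst h; exact ha

/-- A **syllable** `x^a`, where `x` is a vertex and `a ∈ ℤ_{mu x} \ {0}`. -/
def Syllable {V : Type u} [PartialOrder V] (T : TrickleGraph V) : Type u :=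
  Σ x : V, {a : ZMod (T.muNat x) // a ≠ 0}

namespace Syllable

variable {V : Type u} [PartialOrder V] {T : TrickleGraph V}

/-- The element of the trickle group represented by a syllable. -/
def elm (s : Syllable T) : TrickleGroup T :=
  (PresentedGroup.of s.1 : TrickleGroup T) ^ (ZMod.cast s.2.val : ℤ)

end Syllable

/-- Syllabic words. -/
abbrev SylWord {V : Type u} [PartialOrder V] (T : TrickleGraph V) := List (Syllable T)

/-- The element of the trickle group represented by a syllabic word. -/
def SylWord.eval {V : Type u} [PartialOrder V] {T : TrickleGraph V} (w : SylWord T) :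
    TrickleGroup T :=
  (w.map Syllable.elm).prod

/-- The defining relators of the **dual trickle group** of a trickle graph:
`x ^ (mu x)` whenever `mu x ≠ ∞`, and `x · phi_x(y) · (y · phi_y(x))⁻¹` for each edge. -/
def TrickleGraph.dualRels {V : Type u} [PartialOrder V] (T : TrickleGraph V) :
    Set (FreeGroup V) :=
  {r | ∃ (x : V) (n : ℕ), T.mu x = (n : ℕ∞) ∧ r = FreeGroup.of x ^ n} ∪
  {r | ∃ x y : V, T.graph.Adj x y ∧
      r = FreeGroup.of x * FreeGroup.of (T.phi x y) *
          (FreeGroup.of y * FreeGroup.of (T.phi y x))⁻¹}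

theorem perm_apply_inv_self {α : Type*} (f : Equiv.Perm α) (x : α) : f (f⁻¹ x) = x :=
  Equiv.apply_symm_apply f x

theorem perm_inv_apply_self {α : Type*} (f : Equiv.Perm α) (x : α) : f⁻¹ (f x) = x :=
  Equiv.symm_apply_apply f x

namespace TrickleGraph

section Aux

variable {V : Type u} [PartialOrder V] (T : TrickleGraph V)

theorem inStar_of_lt' {x y : V} (h : y < x) : T.graph.InStar x y :=
  Or.inr ((T.adj_of_lt y x h).symm)

theorem phi_self (x : V) : T.phi x x = x := by
  by_contra h
  exact absurd (T.lt_of_phi_ne x x (Or.inl rfl) h) (lt_irrefl x)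

theorem phi_eq_of_not_lt {x y : V} (h : T.graph.InStar x y) (h2 : ¬ y < x) :
    T.phi x y = y := by
  by_contra hne; exact h2 (T.lt_of_phi_ne x y h hne)

theorem phi_lt {x y : V} (h : y < x) : T.phi x y < x := by
  have hs := T.inStar_of_lt' h
  have hle : T.phi x y ≤ x := by
    have := (T.le_phi_iff x x y (Or.inl rfl) hs).mpr h.le
    rwa [T.phi_self] at this
  refine lt_of_le_of_ne hle fun he => ?_
  have : T.phi x y = T.phi x x := by rw [he, T.phi_self]
  exact h.ne ((T.phi x).injective this)

theorem inStar_phi_inv {x y : V} (h : T.graph.InStar x y) :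
    T.graph.InStar x ((T.phi x)⁻¹ y) := by
  by_contra hns
  have h1 := T.phi_apply_of_not_inStar x ((T.phi x)⁻¹ y) hns
  rw [perm_apply_inv_self] at h1
  exact hns (h1 ▸ h)

theorem phi_inv_lt {x y : V} (h : y < x) : (T.phi x)⁻¹ y < x := by
  by_cases he : T.phi x ((T.phi x)⁻¹ y) = (T.phi x)⁻¹ y
  · rw [perm_apply_inv_self] at he; exact he ▸ h
  · exact T.lt_of_phi_ne x _ (T.inStar_phi_inv (T.inStar_of_lt' h)) he

theorem le_phi_inv_iff {x y z : V} (hy : T.graph.InStar x y) (hz : T.graph.InStar x z) :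
    (T.phi x)⁻¹ z ≤ (T.phi x)⁻¹ y ↔ z ≤ y := by
  have := T.le_phi_iff x ((T.phi x)⁻¹ y) ((T.phi x)⁻¹ z)
    (T.inStar_phi_inv hy) (T.inStar_phi_inv hz)
  rwa [perm_apply_inv_self, perm_apply_inv_self, iff_comm] at this

/-- The key combinatorial lemma: for an edge `{x,y}` the pair `(φ_x(y), φ_y(x))` is again an
edge, and `φ` on it recovers the original data. -/
theorem key {x y : V} (h : T.graph.Adj x y) :
    T.graph.Adj (T.phi x y) (T.phi y x) ∧
    T.phi (T.phi x y) x = T.phi y x ∧ T.phi (T.phi y x) y = T.phi x y := by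
  have hsxy : T.graph.InStar x y := Or.inr h
  have hsyx : T.graph.InStar y x := Or.inr h.symm
  by_cases hyx : y < x
  · have hb : T.phi y x = x := T.phi_eq_of_not_lt hsyx (fun hlt => absurd hyx (asymm hlt))
    have ha : T.phi x y < x := T.phi_lt hyx
    have hadj : T.graph.Adj (T.phi x y) x := T.adj_of_lt _ _ ha
    refine ⟨by rw [hb]; exact hadj, ?_, ?_⟩
    · rw [hb]
      exact T.phi_eq_of_not_lt (Or.inr hadj) (fun hlt => absurd ha (asymm hlt))
    · rw [hb]
  · by_cases hxy : x < y
    · have ha : T.phi x y = y := T.phi_eq_of_not_lt hsxy hyx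
      have hb : T.phi y x < y := T.phi_lt hxy
      have hadj : T.graph.Adj (T.phi y x) y := T.adj_of_lt _ _ hb
      refine ⟨by rw [ha]; exact hadj.symm, ?_, ?_⟩
      · rw [ha]
      · rw [ha]
        exact T.phi_eq_of_not_lt (Or.inr hadj) (fun hlt => absurd hb (asymm hlt))
    · have ha : T.phi x y = y := T.phi_eq_of_not_lt hsxy hyx
      have hb : T.phi y x = x := T.phi_eq_of_not_lt hsyx hxy
      exact ⟨by rw [ha, hb]; exact h.symm, by rw [ha, hb], by rw [hb, ha]⟩

/-- The dual of a trickle graph: same graph, order and labeling, each `φ_x` inverted. -/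
def dual : TrickleGraph V where
  graph := T.graph
  mu := T.mu
  phi x := (T.phi x)⁻¹
  two_le_mu := T.two_le_mu
  adj_of_lt := T.adj_of_lt
  phi_apply_of_not_inStar := fun x y h => by
    have h1 := T.phi_apply_of_not_inStar x y h
    simp only [Equiv.Perm.inv_def, Equiv.symm_apply_eq]
    exact h1.symm
  inStar_phi := fun x y h => T.inStar_phi_inv h
  adj_phi_iff := fun x y z hy hz => by
    have := T.adj_phi_iff x ((T.phi x)⁻¹ y) ((T.phi x)⁻¹ z)
      (T.inStar_phi_inv hy) (T.inStar_phi_inv hz)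
    rwa [perm_apply_inv_self, perm_apply_inv_self, iff_comm] at this
  adj_incomp := T.adj_incomp
  le_phi_iff := fun x y z hy hz => T.le_phi_inv_iff hy hz
  lt_of_phi_ne := fun x y h hne => by
    have hz : T.graph.InStar x ((T.phi x)⁻¹ y) := T.inStar_phi_inv h
    have hne' : T.phi x ((T.phi x)⁻¹ y) ≠ (T.phi x)⁻¹ y := by
      rw [perm_apply_inv_self]
      exact fun he => hne he.symm
    have hlt : (T.phi x)⁻¹ y < x := T.lt_of_phi_ne x _ hz hne'
    have : T.phi x ((T.phi x)⁻¹ y) < x := T.phi_lt hlt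
    rwa [perm_apply_inv_self] at this
  phi_pow_mu := fun x => by
    rw [inv_pow, inv_eq_one]
    exact T.phi_pow_mu x
  mu_phi := fun x y h => by
    have := T.mu_phi_zpow x (-1) y
    rwa [zpow_neg_one] at this
  phi_phi := fun x y z hzy hyx => by
    set y' : V := (T.phi x)⁻¹ y with hy'
    have hy'x : y' < x := T.phi_inv_lt hyx
    have hz'y : (T.phi y)⁻¹ z < y := T.phi_inv_lt hzy
    set z' : V := (T.phi y)⁻¹ z with hz'
    have hz'x : z' < x := lt_trans hz'y hyx
    set w : V := (T.phi x)⁻¹ z' with hw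
    have hwy' : w < y' := by
      have hle : w ≤ y' :=
        (T.le_phi_inv_iff (T.inStar_of_lt' hyx) (T.inStar_of_lt' hz'x)).mpr hz'y.le
      refine lt_of_le_of_ne hle fun he => ?_
      have : z' = y := by
        have := congrArg (T.phi x) he
        rwa [perm_apply_inv_self, perm_apply_inv_self] at this
      exact hz'y.ne this
    -- goal: (T.phi x)⁻¹ ((T.phi y)⁻¹ z) = (T.phi ((T.phi x)⁻¹ y))⁻¹ ((T.phi x)⁻¹ z)
    show w = (T.phi y')⁻¹ ((T.phi x)⁻¹ z)
    apply (T.phi y').injective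
    rw [perm_apply_inv_self]
    apply (T.phi x).injective
    rw [perm_apply_inv_self]
    have hg := T.phi_phi x y' w hwy' hy'x
    rw [hg]
    have h1 : T.phi x y' = y := perm_apply_inv_self _ _
    have h2 : T.phi x w = z' := perm_apply_inv_self _ _
    rw [h1, h2, hz', perm_apply_inv_self]

theorem dual_phi (x : V) : T.dual.phi x = (T.phi x)⁻¹ := rfl

theorem dual_dualRels_eq : T.dual.dualRels = T.rels := by
  ext r
  constructor
  · rintro (h | ⟨x, y, hadj, rfl⟩)
    · exact Or.inl h
    · obtain ⟨hadj2, h1, h2⟩ := T.dual.key hadj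
      simp only [dual_phi] at hadj2 h1 h2 ⊢
      refine Or.inr ⟨(T.phi x)⁻¹ y, (T.phi y)⁻¹ x, hadj2, ?_⟩
      have e1 : T.phi ((T.phi x)⁻¹ y) ((T.phi y)⁻¹ x) = x := by
        rw [← h1, perm_apply_inv_self]
      have e2 : T.phi ((T.phi y)⁻¹ x) ((T.phi x)⁻¹ y) = y := by
        rw [← h2, perm_apply_inv_self]
      rw [e1, e2]
  · rintro (h | ⟨x, y, hadj, rfl⟩)
    · exact Or.inl h
    · obtain ⟨hadj2, h1, h2⟩ := T.key hadj
      refine Or.inr ⟨T.phi x y, T.phi y x, hadj2, ?_⟩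
      simp only [dual_phi]
      have e1 : (T.phi (T.phi x y))⁻¹ (T.phi y x) = x := by
        rw [← h1, perm_inv_apply_self]
      have e2 : (T.phi (T.phi y x))⁻¹ (T.phi x y) = y := by
        rw [← h2, perm_inv_apply_self]
      rw [e1, e2]

end Aux

end TrickleGraph

/-- **Proposition 2.2.** The dual of a trickle graph `Γ` (same graph, same order, same labeling,
with each `φ_x` replaced by `φ_x⁻¹`) is again a trickle graph `Γ̃`, and the dual trickle group
of `Γ̃` is isomorphic to `Tr(Γ)` via the map sending each generator `x` to `x`. -/
theorem TrickleGraph.dual_dualTrickleGroup_iso {V : Type u} [PartialOrder V]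
    (T : TrickleGraph V) :
    ∃ Td : TrickleGraph V,
      (Td.graph = T.graph ∧ Td.mu = T.mu ∧ ∀ x : V, Td.phi x = (T.phi x)⁻¹) ∧
      ∃ e : PresentedGroup Td.dualRels ≃* TrickleGroup T,
        ∀ x : V, e (PresentedGroup.of x) = PresentedGroup.of x := by
  refine ⟨T.dual, ⟨rfl, rfl, fun x => rfl⟩, ?_⟩
  rw [T.dual_dualRels_eq]
  exact ⟨MulEquiv.refl _, fun x => rfl⟩
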